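/- Let σ(z) = tanh(z/√2), let Q : (−1,1) → ℝ be continuously differentiable with Q(0) = 0, and set Q₁(u) = (3/2)(u − u³/3). Define Φ₁(z) = (4/3)·σ'(z)·∫₀^{σ(z)} (Q(u) − Q₁(u))/(1 − u²)³ du. Then Φ₁(0) = 0 and Φ₁ solves Φ₁''(z) − (3σ(z)² − 1)·Φ₁(z) = (√2/3)·Q'(σ(z)) − σ'(z) for all real z. -/

import Mathlib

open intervalIntegral

/-- The heteroclinic profile `σ(z) = tanh(z/√2)`. -/
noncomputable def sigma (z : ℝ) : ℝ := Real.tanh (z / Real.sqrt 2)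

/-- The NMN reference kernel `Q₁(u) = (3/2)(u − u³/3)`. -/
noncomputable def Q₁ (u : ℝ) : ℝ := (3 / 2) * (u - u ^ 3 / 3)

lemma tanh_hasDerivAt' (x : ℝ) : HasDerivAt Real.tanh (1 - Real.tanh x ^ 2) x := by
  have hc := Real.cosh_pos x
  have h : HasDerivAt (fun y => Real.sinh y / Real.cosh y)
      ((Real.cosh x * Real.cosh x - Real.sinh x * Real.sinh x) / Real.cosh x ^ 2) x :=
    (Real.hasDerivAt_sinh x).div (Real.hasDerivAt_cosh x) (ne_of_gt hc)
  have he : (fun y => Real.sinh y / Real.cosh y) = Real.tanh := by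
    funext y; rw [Real.tanh_eq_sinh_div_cosh]
  rw [he] at h
  convert h using 1
  rw [Real.tanh_eq_sinh_div_cosh]
  have h2 := Real.cosh_sq_sub_sinh_sq x
  field_simp

lemma tanh_mem_Ioo (x : ℝ) : Real.tanh x ∈ Set.Ioo (-1:ℝ) 1 := by
  have hc := Real.cosh_pos x
  have h1 : Real.sinh x < Real.cosh x := by
    nlinarith [Real.exp_pos (-x), Real.cosh_sub_sinh x]
  have h2 : -Real.cosh x < Real.sinh x := by
    nlinarith [Real.exp_pos x, Real.cosh_add_sinh x]
  rw [Real.tanh_eq_sinh_div_cosh]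
  constructor
  · rw [lt_div_iff₀ hc]; nlinarith
  · rw [div_lt_one hc]; exact h1

lemma sigma_mem_Ioo (z : ℝ) : sigma z ∈ Set.Ioo (-1:ℝ) 1 := tanh_mem_Ioo _

lemma sigma_hasDerivAt (z : ℝ) :
    HasDerivAt sigma ((1 - sigma z ^ 2) / Real.sqrt 2) z := by
  have h1 : HasDerivAt (fun z : ℝ => z / Real.sqrt 2) (1 / Real.sqrt 2) z := by
    simpa using (hasDerivAt_id z).div_const (Real.sqrt 2)
  have h2 := (tanh_hasDerivAt' (z / Real.sqrt 2)).comp z h1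
  refine h2.congr_deriv ?_
  simp [sigma]
  ring

/-- auxiliary integrand -/
noncomputable def gAux (Q : ℝ → ℝ) (u : ℝ) : ℝ := (Q u - Q₁ u) / (1 - u ^ 2) ^ 3

/-- auxiliary antiderivative -/
noncomputable def GAux (Q : ℝ → ℝ) (s : ℝ) : ℝ := ∫ u in (0:ℝ)..s, gAux Q u

lemma den_ne_zero {u : ℝ} (hu : u ∈ Set.Ioo (-1:ℝ) 1) : (1 - u ^ 2) ≠ 0 := by
  obtain ⟨h1, h2⟩ := hu; nlinarith

lemma gAux_contOn {Q : ℝ → ℝ} (hQ : ContDiffOn ℝ 1 Q (Set.Ioo (-1) 1)) :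
    ContinuousOn (gAux Q) (Set.Ioo (-1:ℝ) 1) := by
  have hQ₁c : Continuous Q₁ := by unfold Q₁; fun_prop
  apply ContinuousOn.div (hQ.continuousOn.sub hQ₁c.continuousOn)
    (((continuous_const.sub (continuous_pow 2)).pow 3).continuousOn)
  intro u hu
  exact pow_ne_zero 3 (den_ne_zero hu)

lemma GAux_hasDerivAt {Q : ℝ → ℝ} (hQ : ContDiffOn ℝ 1 Q (Set.Ioo (-1) 1))
    {s : ℝ} (hs : s ∈ Set.Ioo (-1:ℝ) 1) : HasDerivAt (GAux Q) (gAux Q s) s := by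
  have hgc := gAux_contOn hQ
  have hsub : Set.uIcc (0:ℝ) s ⊆ Set.Ioo (-1:ℝ) 1 :=
    Set.ordConnected_Ioo.uIcc_subset (by norm_num) hs
  have hint : IntervalIntegrable (gAux Q) MeasureTheory.volume 0 s :=
    (hgc.mono hsub).intervalIntegrable
  have hmeas : StronglyMeasurableAtFilter (gAux Q) (nhds s) :=
    hgc.stronglyMeasurableAtFilter isOpen_Ioo s hs
  exact intervalIntegral.integral_hasDerivAt_right hint hmeas
    (hgc.continuousAt (isOpen_Ioo.mem_nhds hs))

lemma gAux_hasDerivAt {Q : ℝ → ℝ} (hQ : ContDiffOn ℝ 1 Q (Set.Ioo (-1) 1))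
    {s : ℝ} (hs : s ∈ Set.Ioo (-1:ℝ) 1) :
    HasDerivAt (gAux Q)
      (((deriv Q s - (3/2) * (1 - s^2)) * (1 - s^2)^3
        - (Q s - Q₁ s) * (3 * (1 - s^2)^2 * (-(2*s)))) / ((1 - s^2)^3)^2) s := by
  have hQd : HasDerivAt Q (deriv Q s) s :=
    ((hQ.contDiffAt (isOpen_Ioo.mem_nhds hs)).differentiableAt one_ne_zero).hasDerivAt
  have hQ₁d : HasDerivAt Q₁ ((3/2) * (1 - s^2)) s := by
    have h1 : HasDerivAt (fun u : ℝ => u - u^3/3) (1 - s^2) s := by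
      have h := (hasDerivAt_id s).sub ((hasDerivAt_pow 3 s).div_const 3)
      refine h.congr_deriv ?_; push_cast; ring
    have h2 := h1.const_mul ((3:ℝ)/2)
    have he : Q₁ = fun u : ℝ => (3/2) * (u - u^3/3) := by funext u; rfl
    rw [he]
    refine h2.congr_deriv ?_; ring
  have hdend : HasDerivAt (fun u : ℝ => (1 - u^2)^3) (3 * (1 - s^2)^2 * (-(2*s))) s := by
    have h1 : HasDerivAt (fun u : ℝ => 1 - u^2) (-(2*s)) s := by
      have h := (hasDerivAt_const s (1:ℝ)).sub (hasDerivAt_pow 2 s)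
      refine h.congr_deriv ?_; push_cast; ring
    have h2 := h1.pow 3
    refine h2.congr_deriv ?_; push_cast; ring
  have h := (hQd.sub hQ₁d).div hdend (pow_ne_zero 3 (den_ne_zero hs))
  refine h.congr_deriv ?_; simp only [Pi.sub_apply]

/-- Reduced single-quadrature formula: for `Q` continuously differentiable on `(−1,1)`
with `Q(0) = 0`, the function
`Φ₁(z) = (4/3)·σ'(z)·∫₀^{σ(z)} (Q(u) − Q₁(u))/(1 − u²)³ du` satisfies `Φ₁(0) = 0` and
solves `Φ₁'' − (3σ² − 1)Φ₁ = (√2/3)Q'(σ) − σ'`. -/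
theorem reduced_Phi1_solves_first_order_inner_problem
    (Q : ℝ → ℝ) (hQ : ContDiffOn ℝ 1 Q (Set.Ioo (-1) 1)) (hQ0 : Q 0 = 0)
    (Φ₁ : ℝ → ℝ)
    (hΦ₁ : ∀ z : ℝ, Φ₁ z =
      (4 / 3) * deriv sigma z *
        ∫ u in (0:ℝ)..(sigma z), (Q u - Q₁ u) / (1 - u ^ 2) ^ 3) :
    Φ₁ 0 = 0 ∧
    ∀ z : ℝ, deriv (deriv Φ₁) z - (3 * (sigma z) ^ 2 - 1) * Φ₁ z
      = (Real.sqrt 2 / 3) * deriv Q (sigma z) - deriv sigma z := by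
  have hc0 : Real.sqrt 2 ≠ 0 := by positivity
  have hc2 : Real.sqrt 2 ^ 2 = 2 := Real.sq_sqrt (by norm_num)
  have Φeq : Φ₁ = fun z => (4 / 3) * ((1 - sigma z ^ 2) / Real.sqrt 2) * GAux Q (sigma z) := by
    funext z
    rw [hΦ₁ z, (sigma_hasDerivAt z).deriv]
    rfl
  constructor
  · rw [hΦ₁ 0]
    simp [sigma, Real.tanh_zero]
  intro z
  -- first derivative of Φ₁
  have hD1 : ∀ w : ℝ, HasDerivAt Φ₁
      ((4/3) * (-(sigma w) * (1 - sigma w ^ 2) * GAux Q (sigma w)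
        + (1 - sigma w ^ 2) ^ 2 / 2 * gAux Q (sigma w))) w := by
    intro w
    have hGσ : HasDerivAt (fun z => GAux Q (sigma z))
        (gAux Q (sigma w) * ((1 - sigma w ^ 2) / Real.sqrt 2)) w := by
      have h := (GAux_hasDerivAt hQ (sigma_mem_Ioo w)).comp w (sigma_hasDerivAt w)
      exact h
    have hp : HasDerivAt (fun z => (1 - sigma z ^ 2) / Real.sqrt 2)
        ((-(2 * sigma w * ((1 - sigma w ^ 2) / Real.sqrt 2))) / Real.sqrt 2) w := by
      have h1 : HasDerivAt (fun z : ℝ => 1 - sigma z ^ 2)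
          (-(2 * sigma w * ((1 - sigma w ^ 2) / Real.sqrt 2))) w := by
        have h := (hasDerivAt_const w (1:ℝ)).sub ((sigma_hasDerivAt w).pow 2)
        refine h.congr_deriv ?_; push_cast; ring
      exact h1.div_const _
    have h4 := (hp.mul hGσ).const_mul ((4:ℝ)/3)
    have hfe : Φ₁ = fun z => (4:ℝ)/3 *
        (((1 - sigma z ^ 2) / Real.sqrt 2) * GAux Q (sigma z)) := by
      rw [Φeq]; funext x; ring
    rw [hfe]
    refine h4.congr_deriv ?_
    field_simp
    rw [hc2]; ring
  have hderiv1 : deriv Φ₁ = fun w => (4/3) * (-(sigma w) * (1 - sigma w ^ 2) * GAux Q (sigma w)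
        + (1 - sigma w ^ 2) ^ 2 / 2 * gAux Q (sigma w)) := funext fun w => (hD1 w).deriv
  -- second derivative at z
  have hsmem := sigma_mem_Ioo z
  set s := sigma z with hsdef
  set dg := ((deriv Q s - (3/2) * (1 - s^2)) * (1 - s^2)^3
        - (Q s - Q₁ s) * (3 * (1 - s^2)^2 * (-(2*s)))) / ((1 - s^2)^3)^2 with hdgdef
  have hH : HasDerivAt (fun t : ℝ => (4/3) * (-t * (1 - t ^ 2) * GAux Q t
      + (1 - t ^ 2) ^ 2 / 2 * gAux Q t))
      ((4:ℝ)/3 * (((3*s^2 - 1) * GAux Q s + -s * (1 - s^2) * gAux Q s)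
        + ((-(2*s)) * (1 - s^2) * gAux Q s + (1 - s^2)^2/2 * dg)) ) s := by
    have hpoly1 : HasDerivAt (fun t : ℝ => -t * (1 - t^2)) (3*s^2 - 1) s := by
      have he : (fun t : ℝ => -t * (1 - t^2)) = fun t : ℝ => t^3 - t := by
        funext t; ring
      rw [he]
      have h := (hasDerivAt_pow 3 s).sub (hasDerivAt_id s)
      refine h.congr_deriv ?_; push_cast; ring
    have hpoly2 : HasDerivAt (fun t : ℝ => (1 - t^2)^2 / 2) ((-(2*s)) * (1 - s^2)) s := by
      have h1 : HasDerivAt (fun t : ℝ => 1 - t^2) (-(2*s)) s := by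
        have h := (hasDerivAt_const s (1:ℝ)).sub (hasDerivAt_pow 2 s)
        refine h.congr_deriv ?_
        push_cast; ring
      have h2 := (h1.pow 2).div_const 2
      refine h2.congr_deriv ?_; push_cast; ring
    have h := ((hpoly1.mul (GAux_hasDerivAt hQ hsmem)).add
      (hpoly2.mul (gAux_hasDerivAt hQ hsmem))).const_mul ((4:ℝ)/3)
    refine h.congr_deriv ?_; ring
  have h2nd : HasDerivAt (deriv Φ₁)
      ((4:ℝ)/3 * (((3*s^2 - 1) * GAux Q s + -s * (1 - s^2) * gAux Q s)
        + ((-(2*s)) * (1 - s^2) * gAux Q s + (1 - s^2)^2/2 * dg))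
        * ((1 - s ^ 2) / Real.sqrt 2)) z := by
    rw [hderiv1]
    have h := hH.comp z (sigma_hasDerivAt z)
    exact h
  rw [h2nd.deriv, Φeq, (sigma_hasDerivAt z).deriv]
  simp only [hdgdef, gAux]
  have hden := den_ne_zero hsmem
  field_simp
  linear_combination (-4 * (1 - s^2) * deriv Q s) * hc2
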